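/- Let N_1,…,N_t be row-stochastic matrices with ||N_i|| ≤ λ < 1 for all i, let δ be a vector summing to 0 with ||δ||_1 = 2δ₀, and set D = 1δ^T, M̂_i = N_i + D (assumed row-stochastic). Suppose S* is a set of coordinates with Σ_{s∈S*} δ(s) = δ₀. Then E := M̂_1⋯M̂_t − N_1⋯N_t is an error matrix, and the entries of each row of E on the columns in S* sum to at least (1 − λ/(1−λ))·δ₀. -/

import Mathlib

noncomputable def l1 {s : ℕ} (x : Fin s → ℝ) : ℝ := ∑ i, |x i|

def RowStochastic {s : ℕ} (M : Matrix (Fin s) (Fin s) ℝ) : Prop :=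
  (∀ i j, 0 ≤ M i j) ∧ ∀ i, ∑ j, M i j = 1

def IsErrorMatrix {s : ℕ} (E : Matrix (Fin s) (Fin s) ℝ) : Prop :=
  (∀ i i', E i = E i') ∧ ∀ i, ∑ j, E i j = 0

lemma sum_vecMul_rs {s : ℕ} (M : Matrix (Fin s) (Fin s) ℝ) (hM : RowStochastic M)
    (x : Fin s → ℝ) : ∑ j, Matrix.vecMul x M j = ∑ a, x a := by
  simp only [Matrix.vecMul, dotProduct]
  rw [Finset.sum_comm]
  simp [← Finset.mul_sum, hM.2]

lemma vecMul_D {s : ℕ} (delta : Fin s → ℝ) (hdsum : ∑ j, delta j = 0)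
    (x : Fin s → ℝ) (hx : ∑ a, x a = 0) :
    Matrix.vecMul x (Matrix.of fun _ j => delta j) = 0 := by
  funext j
  simp [Matrix.vecMul, dotProduct, ← Finset.sum_mul, hx]

lemma prod_vecMul_bound {s : ℕ} (lam : ℝ) (hlam0 : 0 ≤ lam)
    (delta : Fin s → ℝ) (hdsum : ∑ j, delta j = 0)
    (L : List (Matrix (Fin s) (Fin s) ℝ))
    (hL : ∀ A ∈ L, RowStochastic A ∧
      (∀ x : Fin s → ℝ, (∑ a, x a) = 0 → l1 (Matrix.vecMul x A) ≤ lam * l1 x))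
    (x : Fin s → ℝ) (hx : ∑ a, x a = 0) :
    (∑ j, Matrix.vecMul x (L.map (· + Matrix.of fun _ j => delta j)).prod j = 0) ∧
    l1 (Matrix.vecMul x (L.map (· + Matrix.of fun _ j => delta j)).prod) ≤ lam ^ L.length * l1 x := by
  induction L generalizing x with
  | nil => simp [Matrix.vecMul_one, hx, l1]
  | cons A L ih =>
    have hA := hL A List.mem_cons_self
    have hL' : ∀ B ∈ L, RowStochastic B ∧
        (∀ x : Fin s → ℝ, (∑ a, x a) = 0 → l1 (Matrix.vecMul x B) ≤ lam * l1 x) :=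
      fun B hB => hL B (List.mem_cons_of_mem _ hB)
    have hstep : Matrix.vecMul x ((A + Matrix.of fun _ j => delta j)) = Matrix.vecMul x A := by
      rw [Matrix.vecMul_add, vecMul_D delta hdsum x hx, add_zero]
    have hy : ∑ a, Matrix.vecMul x A a = 0 := by rw [sum_vecMul_rs A hA.1 x, hx]
    have key : Matrix.vecMul x ((A :: L).map (· + Matrix.of fun _ j => delta j)).prod
        = Matrix.vecMul (Matrix.vecMul x A) (L.map (· + Matrix.of fun _ j => delta j)).prod := by
      rw [List.map_cons, List.prod_cons, ← Matrix.vecMul_vecMul, hstep]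
    obtain ⟨ihs, ihb⟩ := ih hL' (Matrix.vecMul x A) hy
    refine ⟨by rw [key]; exact ihs, ?_⟩
    rw [key, List.length_cons, pow_succ']
    calc l1 (Matrix.vecMul (Matrix.vecMul x A) (L.map (· + Matrix.of fun _ j => delta j)).prod)
        ≤ lam ^ L.length * l1 (Matrix.vecMul x A) := ihb
      _ ≤ lam ^ L.length * (lam * l1 x) := by
          exact mul_le_mul_of_nonneg_left (hA.2 x hx) (pow_nonneg hlam0 _)
      _ = lam * lam ^ L.length * l1 x := by ring

lemma half_bound {s : ℕ} (v : Fin s → ℝ) (hv : ∑ j, v j = 0) (S : Finset (Fin s)) :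
    -(1/2) * (∑ j, |v j|) ≤ ∑ a ∈ S, v a := by
  have h1 : ∑ a ∈ S, v a + ∑ a ∈ Sᶜ, v a = 0 := by rw [Finset.sum_add_sum_compl]; exact hv
  have h2 : ∑ a ∈ S, |v a| + ∑ a ∈ Sᶜ, |v a| = ∑ j, |v j| := Finset.sum_add_sum_compl S _
  have h3 : -∑ a ∈ S, |v a| ≤ ∑ a ∈ S, v a := by
    rw [← Finset.sum_neg_distrib]
    exact Finset.sum_le_sum fun a _ => neg_abs_le _
  have h4 : ∑ a ∈ Sᶜ, v a ≤ ∑ a ∈ Sᶜ, |v a| := Finset.sum_le_sum fun a _ => le_abs_self _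
  linarith

lemma main_aux {s : ℕ} (lam : ℝ) (hlam0 : 0 ≤ lam)
    (delta : Fin s → ℝ) (delta0 : ℝ)
    (hdsum : ∑ j, delta j = 0) (hdl1 : ∑ j, |delta j| = 2 * delta0)
    (Sstar : Finset (Fin s)) (hS : ∑ a ∈ Sstar, delta a = delta0)
    (L : List (Matrix (Fin s) (Fin s) ℝ))
    (hL : ∀ A ∈ L, RowStochastic A ∧
      (∀ x : Fin s → ℝ, (∑ a, x a) = 0 → l1 (Matrix.vecMul x A) ≤ lam * l1 x)) :
    ∃ e : Fin s → ℝ,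
      (∀ i, ((L.map (· + Matrix.of fun _ j => delta j)).prod - L.prod) i = e) ∧
      (∑ j, e j = 0) ∧
      (L = [] → e = 0) ∧
      (L ≠ [] → delta0 - delta0 * ∑ j ∈ Finset.range (L.length - 1), lam ^ (j+1) ≤ ∑ a ∈ Sstar, e a) := by
  induction L with
  | nil =>
    refine ⟨0, fun i => ?_, by simp, fun _ => rfl, by simp⟩
    simp only [List.map_nil, List.prod_nil, sub_self]
    rfl
  | cons A L ih =>
    have hA := hL A List.mem_cons_self
    have hL' : ∀ B ∈ L, RowStochastic B ∧
        (∀ x : Fin s → ℝ, (∑ a, x a) = 0 → l1 (Matrix.vecMul x B) ≤ lam * l1 x) :=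
      fun B hB => hL B (List.mem_cons_of_mem _ hB)
    obtain ⟨e', he', hsum', hnil', hbound'⟩ := ih hL'
    set Dm : Matrix (Fin s) (Fin s) ℝ := Matrix.of fun _ j => delta j with hDm
    set Q : Matrix (Fin s) (Fin s) ℝ := (L.map (· + Dm)).prod with hQ
    set P : Matrix (Fin s) (Fin s) ℝ := L.prod with hP
    obtain ⟨hQsum, hQl1⟩ := prod_vecMul_bound lam hlam0 delta hdsum L hL' delta hdsum
    refine ⟨e' + Matrix.vecMul delta Q, ?_, ?_, ?_, ?_⟩
    · intro i
      have hmat : (A + Dm) * Q - A * P = A * (Q - P) + Dm * Q := by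
        rw [add_mul, Matrix.mul_sub]; abel
      funext j
      have hrow : ∀ k, (Q - P) k j = e' j := fun k => congrFun (he' k) j
      calc (((A :: L).map (· + Dm)).prod - (A :: L).prod) i j
          = ((A + Dm) * Q - A * P) i j := by
            rw [List.map_cons, List.prod_cons, List.prod_cons]
        _ = (A * (Q - P)) i j + (Dm * Q) i j := by rw [hmat, Matrix.add_apply]
        _ = (∑ k, A i k * e' j) + Matrix.vecMul delta Q j := by
            rw [Matrix.mul_apply, Matrix.mul_apply]
            have h1 : ∑ k, A i k * (Q - P) k j = ∑ k, A i k * e' j :=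
              Finset.sum_congr rfl fun k _ => by rw [hrow k]
            have h2 : ∑ k, Dm i k * Q k j = Matrix.vecMul delta Q j := by
              simp [Matrix.vecMul, dotProduct, hDm]
            rw [h1, h2]
        _ = e' j + Matrix.vecMul delta Q j := by
            rw [← Finset.sum_mul, hA.1.2 i, one_mul]
        _ = (e' + Matrix.vecMul delta Q) j := rfl
    · simp only [Pi.add_apply]
      rw [Finset.sum_add_distrib, hsum', hQsum, add_zero]
    · intro h; exact absurd h (List.cons_ne_nil _ _)
    · intro _
      rcases eq_or_ne L [] with hLnil | hLne
      · subst hLnil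
        have he0 : e' = 0 := hnil' rfl
        have hQ1 : Q = 1 := by simp [hQ]
        simp only [he0, hQ1, Matrix.vecMul_one, Pi.add_apply, Pi.zero_apply, zero_add]
        simp [hS]
      · have hlen : L.length - 1 + 1 = L.length :=
          Nat.succ_pred_eq_of_pos (List.length_pos_iff.mpr hLne)
        have hb' := hbound' hLne
        have hhalf := half_bound (Matrix.vecMul delta Q) hQsum Sstar
        have hl1 : l1 (Matrix.vecMul delta Q) ≤ lam ^ L.length * (2 * delta0) := by
          calc l1 (Matrix.vecMul delta Q) ≤ lam ^ L.length * l1 delta := hQl1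
            _ = lam ^ L.length * (2 * delta0) := by rw [show l1 delta = 2 * delta0 from hdl1]
        have hd0 : 0 ≤ delta0 := by
          have : 0 ≤ ∑ j, |delta j| := Finset.sum_nonneg fun j _ => abs_nonneg _
          linarith
        have hkey : -(lam ^ L.length * delta0) ≤ ∑ a ∈ Sstar, Matrix.vecMul delta Q a := by
          have h0 : 0 ≤ ∑ j, |Matrix.vecMul delta Q j| :=
            Finset.sum_nonneg fun j _ => abs_nonneg _
          have := hhalf
          have hl1' : ∑ j, |Matrix.vecMul delta Q j| ≤ lam ^ L.length * (2 * delta0) := hl1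
          linarith
        have hsplit : ∑ a ∈ Sstar, (e' + Matrix.vecMul delta Q) a
            = ∑ a ∈ Sstar, e' a + ∑ a ∈ Sstar, Matrix.vecMul delta Q a := by
          simp [Finset.sum_add_distrib]
        rw [hsplit]
        have hrange : ∑ j ∈ Finset.range ((A :: L).length - 1), lam ^ (j + 1)
            = ∑ j ∈ Finset.range (L.length - 1), lam ^ (j + 1) + lam ^ L.length := by
          rw [List.length_cons, Nat.add_sub_cancel, ← hlen, Finset.sum_range_succ, hlen]
        rw [hrange]
        have : delta0 * (∑ j ∈ Finset.range (L.length - 1), lam ^ (j+1) + lam ^ L.length)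
            = delta0 * ∑ j ∈ Finset.range (L.length - 1), lam ^ (j+1) + delta0 * lam ^ L.length := by ring
        linarith [hb', hkey]

theorem stmt10 {s t : ℕ} (ht : 1 ≤ t)
    (N Mhat : Fin t → Matrix (Fin s) (Fin s) ℝ)
    (lam : ℝ) (hlam0 : 0 ≤ lam) (hlam1 : lam < 1)
    (hN : ∀ i, RowStochastic (N i))
    (hnorm : ∀ i, ∀ x : Fin s → ℝ, (∑ a, x a) = 0 →
      l1 (Matrix.vecMul x (N i)) ≤ lam * l1 x)
    (delta : Fin s → ℝ) (delta0 : ℝ)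
    (hdsum : ∑ j, delta j = 0) (hdl1 : ∑ j, |delta j| = 2 * delta0)
    (D : Matrix (Fin s) (Fin s) ℝ) (hD : D = Matrix.of fun _ j => delta j)
    (hMhat : ∀ i, Mhat i = N i + D)
    (hMhatRS : ∀ i, RowStochastic (Mhat i))
    (Sstar : Finset (Fin s)) (hS : ∑ a ∈ Sstar, delta a = delta0)
    (E : Matrix (Fin s) (Fin s) ℝ)
    (hE : E = (List.ofFn Mhat).prod - (List.ofFn N).prod) :
    IsErrorMatrix E ∧
      ∀ i, (1 - lam / (1 - lam)) * delta0 ≤ ∑ a ∈ Sstar, E i a := by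
  subst hD
  have hofn : List.ofFn Mhat = ((List.ofFn N).map (· + Matrix.of fun _ j => delta j)) := by
    rw [List.map_ofFn]
    exact congrArg List.ofFn (funext fun i => hMhat i)
  have hL : ∀ A ∈ List.ofFn N, RowStochastic A ∧
      (∀ x : Fin s → ℝ, (∑ a, x a) = 0 → l1 (Matrix.vecMul x A) ≤ lam * l1 x) := by
    intro A hA
    rw [List.mem_ofFn] at hA
    obtain ⟨i, rfl⟩ := hA
    exact ⟨hN i, hnorm i⟩
  obtain ⟨e, he, hsum, -, hbound⟩ :=
    main_aux lam hlam0 delta delta0 hdsum hdl1 Sstar hS (List.ofFn N) hL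
  rw [hofn] at hE
  have hErow : ∀ i, E i = e := fun i => by rw [hE]; exact he i
  have hne : List.ofFn N ≠ [] := by
    intro h
    have := congrArg List.length h
    simp at this
    omega
  have hlen : (List.ofFn N).length = t := List.length_ofFn
  have hb := hbound hne
  rw [hlen] at hb
  have hd0 : 0 ≤ delta0 := by
    have : 0 ≤ ∑ j, |delta j| := Finset.sum_nonneg fun j _ => abs_nonneg _
    linarith
  have hgeo : ∑ j ∈ Finset.range (t - 1), lam ^ (j + 1) ≤ lam / (1 - lam) := by
    have h1 : ∑ j ∈ Finset.range (t - 1), lam ^ j ≤ (1 - lam)⁻¹ := by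
      have hpow : (0:ℝ) ≤ lam ^ (t - 1) := pow_nonneg hlam0 _
      rw [geom_sum_eq (ne_of_lt hlam1) (t - 1),
        div_le_iff_of_neg (by linarith : lam - 1 < 0)]
      have hne1 : (1:ℝ) - lam ≠ 0 := ne_of_gt (by linarith)
      have : (1 - lam)⁻¹ * (lam - 1) = -1 := by
        field_simp
        ring
      rw [this]; linarith
    calc ∑ j ∈ Finset.range (t - 1), lam ^ (j + 1)
        = lam * ∑ j ∈ Finset.range (t - 1), lam ^ j := by
          rw [Finset.mul_sum]
          exact Finset.sum_congr rfl fun j _ => by rw [pow_succ']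
      _ ≤ lam * (1 - lam)⁻¹ := mul_le_mul_of_nonneg_left h1 hlam0
      _ = lam / (1 - lam) := by rw [div_eq_mul_inv]
  constructor
  · refine ⟨fun i i' => by rw [hErow i, hErow i'], fun i => ?_⟩
    have : ∀ j, E i j = e j := fun j => congrFun (hErow i) j
    simp only [this]; exact hsum
  · intro i
    have heq : ∑ a ∈ Sstar, E i a = ∑ a ∈ Sstar, e a :=
      Finset.sum_congr rfl fun a _ => congrFun (hErow i) a
    rw [heq]
    nlinarith [mul_le_mul_of_nonneg_left hgeo hd0]
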